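/- For every measurable set A ⊆ [0,1] with μ(A) > 0, every integer n ≥ 1 and every t > 0, μ( { x ∈ [0,1] : 𝒵_A(x) ≥ n^{−1/3}·( t + 2^{4/3}·D^{1/3}/μ(A) ) } ) ≤ D / (n^{1/3}·t²). -/

import Mathlib

open MeasureTheory Set

set_option maxHeartbeats 1000000 in
/-- **Average shadowing estimate** for the intermittent interval map: for every
measurable `A ⊆ [0,1]` with `μ(A) > 0`, every `n ≥ 1` and every `t > 0`,
`μ{x : 𝒵_A(x) ≥ n^{-1/3}(t + 2^{4/3} D^{1/3}/μ(A))} ≤ D/(n^{1/3} t²)`, where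
`𝒵_A(x) = (1/n) inf_{y ∈ A} ∑_{j=0}^{n-1} |T^j x - T^j y|`. -/
theorem shadowing_intermittent_map
    (α : ℝ) (hα0 : 0 < α) (hα1 : α < 4 - Real.sqrt 15)
    (T : ℝ → ℝ) (hT_maps : MapsTo T (Icc (0:ℝ) 1) (Icc (0:ℝ) 1))
    (hT_formula : ∀ x ∈ Ico (0:ℝ) (1/2), T x = x + (2:ℝ) ^ α * x ^ (1 + α))
    (T' : ℝ → ℝ)
    (hT_deriv : ∀ x ∈ Icc (1/2:ℝ) 1, HasDerivWithinAt T (T' x) (Icc (1/2:ℝ) 1) x)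
    (hT_C2 : ContDiffOn ℝ 2 T (Icc (1/2:ℝ) 1))
    (hT_bij : BijOn T (Icc (1/2:ℝ) 1) (Icc (0:ℝ) 1))
    (hT_expanding : ∀ x ∈ Icc (1/2:ℝ) 1, 1 < |T' x|)
    (h : ℝ → ℝ) (c₁ c₂ : ℝ) (hc₁ : 0 < c₁) (hc₁₂ : c₁ ≤ c₂)
    (hdens : ∀ x ∈ Ioc (0:ℝ) 1, c₁ * x ^ (-α) ≤ h x ∧ h x ≤ c₂ * x ^ (-α))
    (μ : Measure ℝ) (hprob : IsProbabilityMeasure μ)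
    (hμ : μ = (volume.restrict (Icc (0:ℝ) 1)).withDensity (fun x => ENNReal.ofReal (h x)))
    (hinv : MeasurePreserving T μ μ)
    -- variance (Devroye) inequality
    (D : ℝ) (hD : 0 < D)
    (hvar : ∀ n : ℕ, 1 ≤ n → ∀ (K : (Fin n → ℝ) → ℝ) (L : Fin n → ℝ),
      (∀ (j : Fin n) (z zz : Fin n → ℝ), (∀ i, i ≠ j → z i = zz i) →
        |K z - K zz| ≤ L j * |z j - zz j|) →
      ∫ x, (K (fun i => T^[(i:ℕ)] x) - ∫ y, K (fun i => T^[(i:ℕ)] y) ∂μ) ^ 2 ∂μ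
        ≤ D * ∑ j, (L j) ^ 2) :
    ∀ A : Set ℝ, A ⊆ Icc (0:ℝ) 1 → MeasurableSet A → 0 < μ A →
    ∀ n : ℕ, 1 ≤ n → ∀ t : ℝ, 0 < t →
      μ {x | x ∈ Icc (0:ℝ) 1 ∧
          (1 / (n : ℝ)) *
            sInf {r : ℝ | ∃ y ∈ A, r = ∑ j ∈ Finset.range n, |T^[j] x - T^[j] y|}
          ≥ (1 / (n : ℝ) ^ ((1:ℝ)/3)) *
              (t + (2:ℝ) ^ ((4:ℝ)/3) * D ^ ((1:ℝ)/3) / (μ A).toReal)}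
        ≤ ENNReal.ofReal (D / ((n : ℝ) ^ ((1:ℝ)/3) * t ^ 2)) := by
  intro A hA hAm hAμ n hn t ht
  classical
  haveI : IsProbabilityMeasure μ := hprob
  obtain ⟨a0, ha0⟩ : A.Nonempty := nonempty_of_measure_ne_zero hAμ.ne'
  have hTm : Measurable T := hinv.measurable
  have hiter : ∀ j : ℕ, ∀ x ∈ Icc (0:ℝ) 1, T^[j] x ∈ Icc (0:ℝ) 1 := by
    intro j
    induction j with
    | zero => intro x hx; simpa using hx
    | succ k ih =>
        intro x hx
        rw [Function.iterate_succ_apply']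
        exact hT_maps (ih x hx)
  -- abbreviations
  set ν : ℝ := (n:ℝ) ^ ((1:ℝ)/3) with hνdef
  set d : ℝ := D ^ ((1:ℝ)/3) with hddef
  set a : ℝ := (μ A).toReal with hadef
  have hN1 : (1:ℝ) ≤ (n:ℝ) := by exact_mod_cast hn
  have hN0 : (0:ℝ) < (n:ℝ) := by linarith
  have hν0 : 0 < ν := Real.rpow_pos_of_pos hN0 _
  have hν3 : ν ^ 3 = (n:ℝ) := by
    rw [hνdef, ← Real.rpow_natCast ((n:ℝ) ^ ((1:ℝ)/3)) 3, ← Real.rpow_mul hN0.le]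
    norm_num
  have hd0 : 0 < d := Real.rpow_pos_of_pos hD _
  have hd3 : d ^ 3 = D := by
    rw [hddef, ← Real.rpow_natCast (D ^ ((1:ℝ)/3)) 3, ← Real.rpow_mul hD.le]
    norm_num
  set e : ℝ := (2:ℝ) ^ ((1:ℝ)/3) with hedef
  have he0 : 0 < e := Real.rpow_pos_of_pos two_pos _
  have he3 : e ^ 3 = 2 := by
    rw [hedef, ← Real.rpow_natCast ((2:ℝ) ^ ((1:ℝ)/3)) 3,
      ← Real.rpow_mul (by norm_num : (0:ℝ) ≤ 2)]
    norm_num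
  have hc24 : (2:ℝ) ^ ((4:ℝ)/3) = 2 * e := by
    rw [hedef, show (4:ℝ)/3 = 1 + 1/3 by norm_num, Real.rpow_add two_pos, Real.rpow_one]
  have hb0pre : (0:ℝ) < e * d * ν ^ 2 := by positivity
  have ha0' : 0 < a := by
    rw [hadef]; exact ENNReal.toReal_pos hAμ.ne' (measure_ne_top μ A)
  have ha1 : a ≤ 1 := by
    rw [hadef]
    have := ENNReal.toReal_mono (b := 1) (by simp) (prob_le_one (μ := μ) (s := A))
    simpa using this
  clear_value ν d a e
  -- the kernel K
  set K : (Fin n → ℝ) → ℝ :=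
    fun z => sInf {r : ℝ | ∃ y ∈ A, r = ∑ j : Fin n, |z j - T^[(j:ℕ)] y|} with hK
  have hKne : ∀ z : Fin n → ℝ,
      {r : ℝ | ∃ y ∈ A, r = ∑ j : Fin n, |z j - T^[(j:ℕ)] y|}.Nonempty :=
    fun z => ⟨_, a0, ha0, rfl⟩
  have hKbdd : ∀ z : Fin n → ℝ,
      BddBelow {r : ℝ | ∃ y ∈ A, r = ∑ j : Fin n, |z j - T^[(j:ℕ)] y|} := by
    intro z
    refine ⟨0, ?_⟩
    rintro r ⟨y, hy, rfl⟩
    positivity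
  have hK0 : ∀ z, 0 ≤ K z := by
    intro z
    refine le_csInf (hKne z) ?_
    rintro r ⟨y, hy, rfl⟩
    positivity
  have hKle : ∀ z y, y ∈ A → K z ≤ ∑ j : Fin n, |z j - T^[(j:ℕ)] y| :=
    fun z y hy => csInf_le (hKbdd z) ⟨y, hy, rfl⟩
  have hKdiff : ∀ (z zz : Fin n → ℝ) (δ : ℝ),
      (∀ y : ℝ, ∑ j : Fin n, |z j - T^[(j:ℕ)] y|
        ≤ ∑ j : Fin n, |zz j - T^[(j:ℕ)] y| + δ) →
      K z ≤ K zz + δ := by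
    intro z zz δ hδ
    have hstep : K z - δ ≤ K zz := by
      refine le_csInf (hKne zz) ?_
      rintro r ⟨y, hy, rfl⟩
      have h1 := hKle z y hy
      have h2 := hδ y
      linarith
    linarith
  have hKcw : ∀ (j : Fin n) (z zz : Fin n → ℝ), (∀ i, i ≠ j → z i = zz i) →
      |K z - K zz| ≤ |z j - zz j| := by
    intro j z zz hzz
    have hgen : ∀ (u v : Fin n → ℝ), (∀ i, i ≠ j → u i = v i) →
        ∀ y : ℝ, ∑ i : Fin n, |u i - T^[(i:ℕ)] y|
          ≤ ∑ i : Fin n, |v i - T^[(i:ℕ)] y| + |u j - v j| := by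
      intro u v huv y
      have hterm : ∀ i : Fin n, |u i - T^[(i:ℕ)] y|
          ≤ |v i - T^[(i:ℕ)] y| + (if i = j then |u j - v j| else 0) := by
        intro i
        by_cases hij : i = j
        · subst hij
          rw [if_pos rfl]
          have := abs_sub_le (u i) (v i) (T^[(i:ℕ)] y)
          linarith [this]
        · simp [hij, huv i hij]
      calc ∑ i : Fin n, |u i - T^[(i:ℕ)] y|
          ≤ ∑ i : Fin n, (|v i - T^[(i:ℕ)] y| + (if i = j then |u j - v j| else 0)) :=
            Finset.sum_le_sum fun i _ => hterm i
        _ = ∑ i : Fin n, |v i - T^[(i:ℕ)] y| + |u j - v j| := by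
            rw [Finset.sum_add_distrib, Finset.sum_ite_eq' Finset.univ j
              (fun _ => |u j - v j|)]
            simp
    have h1 := hKdiff z zz _ (hgen z zz hzz)
    have h2 := hKdiff zz z _ (hgen zz z (fun i hi => (hzz i hi).symm))
    rw [abs_sub_le_iff]
    constructor
    · linarith
    · rw [abs_sub_comm]; linarith
  have hKsumlip : ∀ (z zz : Fin n → ℝ),
      |K z - K zz| ≤ ∑ i : Fin n, |z i - zz i| := by
    intro z zz
    have hgen : ∀ (u v : Fin n → ℝ), ∀ y : ℝ,
        ∑ i : Fin n, |u i - T^[(i:ℕ)] y|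
          ≤ ∑ i : Fin n, |v i - T^[(i:ℕ)] y| + ∑ i : Fin n, |u i - v i| := by
      intro u v y
      rw [← Finset.sum_add_distrib]
      refine Finset.sum_le_sum fun i _ => ?_
      have := abs_sub_le (u i) (v i) (T^[(i:ℕ)] y)
      linarith
    have h1 := hKdiff z zz _ (hgen z zz)
    have h2 := hKdiff zz z _ (hgen zz z)
    have hsymm : ∑ i : Fin n, |zz i - z i| = ∑ i : Fin n, |z i - zz i| := by
      refine Finset.sum_congr rfl fun i _ => abs_sub_comm _ _
    rw [abs_sub_le_iff]
    constructor
    · linarith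
    · rw [hsymm] at h2; linarith
  have hKcont : Continuous K := by
    refine (LipschitzWith.of_dist_le_mul (K := (n : NNReal)) ?_).continuous
    intro z zz
    rw [Real.dist_eq]
    refine (hKsumlip z zz).trans ?_
    have : ∀ i : Fin n, |z i - zz i| ≤ dist z zz := by
      intro i
      rw [← Real.dist_eq]
      exact dist_le_pi_dist z zz i
    calc ∑ i : Fin n, |z i - zz i| ≤ ∑ _i : Fin n, dist z zz :=
          Finset.sum_le_sum fun i _ => this i
      _ = (n : ℝ) * dist z zz := by simp [mul_comm]
  -- F = K along the orbit
  set F : ℝ → ℝ := fun x => K (fun i : Fin n => T^[(i:ℕ)] x) with hF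
  have hFd : ∀ x, K (fun i : Fin n => T^[(i:ℕ)] x) = F x := fun _ => rfl
  have hFm : Measurable F := by
    rw [hF]
    exact hKcont.measurable.comp (measurable_pi_lambda _ fun i => hTm.iterate _)
  have hF0 : ∀ x, 0 ≤ F x := fun x => hK0 _
  have hFA : ∀ y ∈ A, F y = 0 := by
    intro y hy
    refine le_antisymm ?_ (hF0 y)
    have := hKle (fun i : Fin n => T^[(i:ℕ)] y) y hy
    simpa using this
  have hFsInf : ∀ x : ℝ, F x
      = sInf {r : ℝ | ∃ y ∈ A, r = ∑ j : Fin n, |T^[(j:ℕ)] x - T^[(j:ℕ)] y|} :=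
    fun _ => rfl
  have hFbd : ∀ x ∈ Icc (0:ℝ) 1, F x ≤ (n:ℝ) := by
    intro x hx
    refine (hKle _ a0 ha0).trans ?_
    calc ∑ i : Fin n, |T^[(i:ℕ)] x - T^[(i:ℕ)] a0| ≤ ∑ _i : Fin n, (1:ℝ) := by
          refine Finset.sum_le_sum fun i _ => ?_
          have hu := hiter i x hx
          have hv := hiter i a0 (hA ha0)
          rw [abs_sub_le_iff]
          constructor <;> [linarith [hu.2, hv.1]; linarith [hu.1, hv.2]]
      _ = (n:ℝ) := by simp
  have hIccm : MeasurableSet (Icc (0:ℝ) 1) := measurableSet_Icc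
  have hnull : μ (Icc (0:ℝ) 1)ᶜ = 0 := by
    rw [hμ, withDensity_apply _ hIccm.compl, Measure.restrict_restrict hIccm.compl]
    simp
  have hae : ∀ᵐ x ∂μ, x ∈ Icc (0:ℝ) 1 := by
    refine ae_iff.2 ?_
    have hset : {x : ℝ | ¬ x ∈ Icc (0:ℝ) 1} = (Icc (0:ℝ) 1)ᶜ := rfl
    rw [hset]
    exact hnull
  have hFint : Integrable F μ := by
    refine Integrable.mono' (integrable_const (n:ℝ)) hFm.aestronglyMeasurable ?_
    filter_upwards [hae] with x hx
    rw [Real.norm_eq_abs, abs_of_nonneg (hF0 x)]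
    exact hFbd x hx
  -- variance inequality for K
  have hvarF0 := hvar n hn K (fun _ => 1) (by
    intro j z zz hz
    rw [one_mul]
    exact hKcw j z zz hz)
  simp only [hFd] at hvarF0
  set E : ℝ := ∫ y, F y ∂μ with hE
  have hE0 : 0 ≤ E := by rw [hE]; exact integral_nonneg fun x => hF0 x
  clear_value E
  have hvarF : ∫ x, (F x - E) ^ 2 ∂μ ≤ D * (n:ℝ) := by
    refine hvarF0.trans ?_
    simp
  -- truncated auxiliary kernel
  set b : ℝ := e * d * ν ^ 2 / a with hb
  have hb0 : 0 < b := by rw [hb]; positivity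
  clear_value b
  set Φfull : (Fin n → ℝ) → ℝ := fun z => max 0 (1 - K z / b) with hΦfull
  have hΦlip : ∀ (j : Fin n) (z zz : Fin n → ℝ), (∀ i, i ≠ j → z i = zz i) →
      |Φfull z - Φfull zz| ≤ (fun _ : Fin n => 1 / b) j * |z j - zz j| := by
    intro j z zz hz
    have h2 : |K z - K zz| ≤ |z j - zz j| := hKcw j z zz hz
    have h3 : |Φfull z - Φfull zz| ≤ |(1 - K z / b) - (1 - K zz / b)| := by
      rw [hΦfull]
      simp only []
      rw [max_comm 0 (1 - K z / b), max_comm 0 (1 - K zz / b)]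
      exact abs_max_sub_max_le_abs _ _ _
    refine h3.trans ?_
    have h4 : (1 - K z / b) - (1 - K zz / b) = (K zz - K z) / b := by ring
    have h5 : (fun _ : Fin n => 1 / b) j * |z j - zz j| = |z j - zz j| / b := by
      rw [one_div, inv_mul_eq_div]
    have h6 : |K zz - K z| ≤ |z j - zz j| := by rw [abs_sub_comm]; exact h2
    rw [h4, abs_div, abs_of_pos hb0, h5]
    exact div_le_div_of_nonneg_right h6 hb0.le
  have hvarΦ0 := hvar n hn Φfull (fun _ => 1 / b) hΦlip
  set Φ : ℝ → ℝ := fun x => Φfull (fun i : Fin n => T^[(i:ℕ)] x) with hΦ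
  have hΦd : ∀ x, Φfull (fun i : Fin n => T^[(i:ℕ)] x) = Φ x := fun _ => rfl
  simp only [hΦd] at hvarΦ0
  have hΦF : ∀ x : ℝ, Φ x = max 0 (1 - F x / b) := fun _ => rfl
  clear_value K F Φfull Φ
  have hΦ0 : ∀ x, 0 ≤ Φ x := by
    intro x; rw [hΦF x]; exact le_max_left _ _
  have hΦ1 : ∀ x, Φ x ≤ 1 := by
    intro x
    rw [hΦF x]
    refine max_le (by norm_num) ?_
    have h1 : 0 ≤ F x / b := div_nonneg (hF0 x) hb0.le
    linarith
  have hΦm : Measurable Φ := by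
    have : Φ = fun x => max 0 (1 - F x / b) := funext hΦF
    rw [this]
    exact measurable_const.max ((hFm.div_const b).const_sub 1)
  have hΦint : Integrable Φ μ := by
    refine Integrable.mono' (integrable_const (1:ℝ)) hΦm.aestronglyMeasurable ?_
    filter_upwards with x
    rw [Real.norm_eq_abs, abs_of_nonneg (hΦ0 x)]
    exact hΦ1 x
  set EΦ : ℝ := ∫ y, Φ y ∂μ with hEΦ
  clear_value EΦ
  have hvarΦ : ∫ x, (Φ x - EΦ) ^ 2 ∂μ ≤ D * (n:ℝ) / b ^ 2 := by
    refine hvarΦ0.trans ?_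
    rw [Finset.sum_const]
    simp only [Finset.card_univ, Fintype.card_fin, nsmul_eq_mul]
    rw [div_pow, one_pow]
    ring_nf
    exact le_of_eq (by ring)
  have hEΦa : a ≤ EΦ := by
    have h1 : ∫ x in A, Φ x ∂μ = a := by
      have hone : ∀ x ∈ A, Φ x = 1 := by
        intro y hy
        rw [hΦF y, hFA y hy]
        norm_num
      rw [setIntegral_congr_fun hAm hone, setIntegral_const, smul_eq_mul, mul_one]
      exact hadef.symm
    have h2 : ∫ x in A, Φ x ∂μ ≤ ∫ y, Φ y ∂μ :=
      setIntegral_le_integral hΦint (Filter.Eventually.of_forall hΦ0)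
    rw [hEΦ]
    linarith
  have hEΦ0 : 0 < EΦ := lt_of_lt_of_le ha0' hEΦa
  -- tail estimate
  set Sb : Set ℝ := {x | b ≤ F x} with hSb
  have hSbm : MeasurableSet Sb := measurableSet_le measurable_const hFm
  have hGint : Integrable (fun x => (Φ x - EΦ) ^ 2) μ := by
    refine Integrable.mono' (integrable_const ((1 + |EΦ|) ^ 2))
      ((hΦm.sub measurable_const).pow_const 2).aestronglyMeasurable ?_
    filter_upwards with x
    rw [Real.norm_eq_abs, abs_of_nonneg (sq_nonneg _)]
    have h1 := hΦ0 x
    have h2 := hΦ1 x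
    have h3 := le_abs_self EΦ
    have h4 := neg_abs_le EΦ
    have h5 := abs_nonneg EΦ
    refine sq_le_sq' ?_ ?_
    · linarith
    · linarith
  have htail : (μ Sb).toReal ≤ D * (n:ℝ) / b ^ 2 / a ^ 2 := by
    have h1 : ∫ x in Sb, (Φ x - EΦ) ^ 2 ∂μ ≤ ∫ x, (Φ x - EΦ) ^ 2 ∂μ :=
      setIntegral_le_integral hGint (Filter.Eventually.of_forall fun x => sq_nonneg _)
    have h2 : (μ Sb).toReal * a ^ 2 ≤ ∫ x in Sb, (Φ x - EΦ) ^ 2 ∂μ := by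
      have hpt : ∀ x ∈ Sb, a ^ 2 ≤ (Φ x - EΦ) ^ 2 := by
        intro x hx
        have hΦx : Φ x = 0 := by
          rw [hΦF x]
          refine max_eq_left ?_
          have hbF : b ≤ F x := hx
          have h6 : 1 ≤ F x / b := (one_le_div hb0).2 hbF
          linarith
        rw [hΦx]
        have h7 : a ^ 2 ≤ EΦ ^ 2 := pow_le_pow_left₀ ha0'.le hEΦa 2
        calc a ^ 2 ≤ EΦ ^ 2 := h7
          _ = (0 - EΦ) ^ 2 := by ring
      calc (μ Sb).toReal * a ^ 2 = ∫ _x in Sb, a ^ 2 ∂μ := by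
            rw [setIntegral_const, smul_eq_mul]; rfl
        _ ≤ ∫ x in Sb, (Φ x - EΦ) ^ 2 ∂μ :=
            setIntegral_mono_on (integrable_const _).integrableOn hGint.integrableOn hSbm hpt
    have h3 : (μ Sb).toReal * a ^ 2 ≤ D * (n:ℝ) / b ^ 2 := le_trans h2 (h1.trans hvarΦ)
    exact (le_div_iff₀ (by positivity : (0:ℝ) < a ^ 2)).2 h3
  -- mean estimate
  have hmean : E ≤ b + (n:ℝ) * (μ Sb).toReal := by
    have hind : Integrable (fun x => b + (n:ℝ) * Sb.indicator (fun _ => (1:ℝ)) x) μ := by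
      refine (integrable_const b).add (Integrable.const_mul ?_ _)
      exact (integrable_const (1:ℝ)).indicator hSbm
    have hle : ∀ᵐ x ∂μ, F x ≤ b + (n:ℝ) * Sb.indicator (fun _ => (1:ℝ)) x := by
      filter_upwards [hae] with x hx
      by_cases hxb : x ∈ Sb
      · rw [indicator_of_mem hxb]
        have := hFbd x hx
        linarith [hb0]
      · rw [indicator_of_notMem hxb]
        have : ¬ b ≤ F x := hxb
        push_neg at this
        linarith
    have := integral_mono_ae hFint hind hle
    rw [hE]
    refine this.trans (le_of_eq ?_)
    rw [integral_add (integrable_const b) (Integrable.const_mul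
      ((integrable_const (1:ℝ)).indicator hSbm) _)]
    rw [integral_const, integral_const_mul, integral_indicator_const _ hSbm]
    simp [Measure.real]
  have hEbound : E ≤ ν ^ 2 * ((2:ℝ) ^ ((4:ℝ)/3) * d / a) := by
    have h1 : E ≤ b + (n:ℝ) * (D * (n:ℝ) / b ^ 2 / a ^ 2) := by
      refine hmean.trans ?_
      have := mul_le_mul_of_nonneg_left htail hN0.le
      linarith
    have hkey : b + (n:ℝ) * (D * (n:ℝ) / b ^ 2 / a ^ 2)
        = e * d * ν ^ 2 / a + e * d * ν ^ 2 / 2 := by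
      rw [← hν3, ← hd3, hb, show (2:ℝ) = e ^ 3 from he3.symm]
      field_simp
    rw [hkey] at h1
    have h2 : e * d * ν ^ 2 / 2 ≤ e * d * ν ^ 2 / a := by
      apply div_le_div_of_nonneg_left (by positivity) ha0'
      linarith
    have h3 : e * d * ν ^ 2 / a + e * d * ν ^ 2 / a = ν ^ 2 * ((2:ℝ) ^ ((4:ℝ)/3) * d / a) := by
      rw [hc24]; ring
    linarith
  -- the set in the statement is contained in a deviation set
  set Sfin : Set ℝ := {x | ν ^ 2 * t + E ≤ F x} with hSfin
  have hSfinm : MeasurableSet Sfin := measurableSet_le measurable_const hFm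
  have hsub : {x | x ∈ Icc (0:ℝ) 1 ∧
      (1 / (n : ℝ)) *
        sInf {r : ℝ | ∃ y ∈ A, r = ∑ j ∈ Finset.range n, |T^[j] x - T^[j] y|}
      ≥ (1 / ν) * (t + (2:ℝ) ^ ((4:ℝ)/3) * d / a)} ⊆ Sfin := by
    intro x hx
    obtain ⟨hx1, hx2⟩ := hx
    have hseteq : {r : ℝ | ∃ y ∈ A, r = ∑ j ∈ Finset.range n, |T^[j] x - T^[j] y|}
        = {r : ℝ | ∃ y ∈ A, r = ∑ j : Fin n, |T^[(j:ℕ)] x - T^[(j:ℕ)] y|} := by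
      ext r
      constructor
      · rintro ⟨y, hy, rfl⟩
        exact ⟨y, hy, by rw [← Finset.sum_range fun j => |T^[j] x - T^[j] y|]⟩
      · rintro ⟨y, hy, rfl⟩
        exact ⟨y, hy, by rw [Finset.sum_range fun j => |T^[j] x - T^[j] y|]⟩
    have hFx : sInf {r : ℝ | ∃ y ∈ A, r = ∑ j ∈ Finset.range n, |T^[j] x - T^[j] y|}
        = F x := by
      rw [hseteq]
      exact (hFsInf x).symm
    rw [hFx] at hx2
    have hmul := mul_le_mul_of_nonneg_left hx2 hN0.le
    rw [← mul_assoc, ← mul_assoc, mul_one_div, mul_one_div, div_self hN0.ne', one_mul]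
      at hmul
    have hnν : (n:ℝ) / ν = ν ^ 2 := by
      rw [eq_comm, eq_div_iff hν0.ne', ← hν3]; ring
    rw [hnν] at hmul
    have : ν ^ 2 * t + E ≤ F x := by
      have h5 : ν ^ 2 * (t + (2:ℝ) ^ ((4:ℝ)/3) * d / a)
          = ν ^ 2 * t + ν ^ 2 * ((2:ℝ) ^ ((4:ℝ)/3) * d / a) := by ring
      rw [h5] at hmul
      linarith [hEbound, hmul]
    exact this
  -- Chebyshev on Sfin
  have hG2int : Integrable (fun x => (F x - E) ^ 2) μ := by
    refine Integrable.mono' (integrable_const (((n:ℝ) + |E|) ^ 2))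
      ((hFm.sub measurable_const).pow_const 2).aestronglyMeasurable ?_
    filter_upwards [hae] with x hx
    rw [Real.norm_eq_abs, abs_of_nonneg (sq_nonneg _)]
    have h1 := hF0 x
    have h2 := hFbd x hx
    have h3 := le_abs_self E
    have h4 := neg_abs_le E
    have h5 := abs_nonneg E
    refine sq_le_sq' ?_ ?_
    · linarith
    · linarith
  have hfin : (μ Sfin).toReal ≤ D / (ν * t ^ 2) := by
    have h1 : ∫ x in Sfin, (F x - E) ^ 2 ∂μ ≤ ∫ x, (F x - E) ^ 2 ∂μ :=
      setIntegral_le_integral hG2int (Filter.Eventually.of_forall fun x => sq_nonneg _)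
    have h2 : (μ Sfin).toReal * (ν ^ 2 * t) ^ 2 ≤ ∫ x in Sfin, (F x - E) ^ 2 ∂μ := by
      have hpt : ∀ x ∈ Sfin, (ν ^ 2 * t) ^ 2 ≤ (F x - E) ^ 2 := by
        intro x hx
        have hxx : ν ^ 2 * t + E ≤ F x := hx
        have hpos : 0 ≤ ν ^ 2 * t := by positivity
        have h8 : ν ^ 2 * t ≤ F x - E := by linarith
        exact pow_le_pow_left₀ hpos h8 2
      calc (μ Sfin).toReal * (ν ^ 2 * t) ^ 2 = ∫ _x in Sfin, (ν ^ 2 * t) ^ 2 ∂μ := by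
            rw [setIntegral_const, smul_eq_mul]; rfl
        _ ≤ ∫ x in Sfin, (F x - E) ^ 2 ∂μ :=
            setIntegral_mono_on (integrable_const _).integrableOn hG2int.integrableOn
              hSfinm hpt
    have h3 : (μ Sfin).toReal * (ν ^ 2 * t) ^ 2 ≤ D * (n:ℝ) := le_trans h2 (h1.trans hvarF)
    have h4 : (μ Sfin).toReal ≤ D * (n:ℝ) / (ν ^ 2 * t) ^ 2 :=
      (le_div_iff₀ (by positivity)).2 h3
    refine h4.trans (le_of_eq ?_)
    rw [← hν3]
    field_simp
  calc μ {x | x ∈ Icc (0:ℝ) 1 ∧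
          (1 / (n : ℝ)) *
            sInf {r : ℝ | ∃ y ∈ A, r = ∑ j ∈ Finset.range n, |T^[j] x - T^[j] y|}
          ≥ (1 / ν) * (t + (2:ℝ) ^ ((4:ℝ)/3) * d / a)}
      ≤ μ Sfin := measure_mono hsub
    _ = ENNReal.ofReal ((μ Sfin).toReal) := (ENNReal.ofReal_toReal (measure_ne_top μ _)).symm
    _ ≤ ENNReal.ofReal (D / (ν * t ^ 2)) := ENNReal.ofReal_le_ofReal hfin
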